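/- For every subset B ⊆ [n−2] and any i, j, k, ℓ ∈ [n], the number of permutations σ ∈ Sₙ with D₃(σ) = B and σᵢ = j equals the number of permutations σ ∈ Sₙ with D₃(σ) = B and σₖ = ℓ. -/

import Mathlib

open Finset
open scoped Classical

/-- entry of a permutation of `Fin n` at 0-indexed position `i` (0-based values). -/
def ent {n : ℕ} (σ : Equiv.Perm (Fin n)) (i : ℕ) : ℕ :=
  if h : i < n then (σ ⟨i, h⟩ : ℕ) else 0

/-- the triple `(a, b, c)` of distinct values, reduced to a permutation in `S₃`, is odd. -/
def odd3 (a b c : ℕ) : Prop :=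
  ((if b < a then 1 else 0) + (if c < a then 1 else 0) + (if c < b then 1 else 0)) % 2 = 1

instance (a b c : ℕ) : Decidable (odd3 a b c) := by
  unfold odd3; infer_instance

/-- 3-descent set, 0-indexed positions (position `i` here is paper position `i+1`). -/
def D3 {n : ℕ} (σ : Equiv.Perm (Fin n)) : Finset ℕ :=
  (Finset.range (n - 2)).filter (fun i => odd3 (ent σ i) (ent σ (i + 1)) (ent σ (i + 2)))

/-- alternating descent set, 0-indexed positions. -/
def altD {n : ℕ} (σ : Equiv.Perm (Fin n)) : Finset ℕ :=
  (Finset.range (n - 1)).filter (fun i =>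
    (Even i ∧ ent σ (i + 1) < ent σ i) ∨ (¬ Even i ∧ ent σ i < ent σ (i + 1)))

/-- number of up-down alternating permutations of `[n]` (the Euler number `Eₙ`). -/
noncomputable def EulerNum (n : ℕ) : ℕ :=
  ((Finset.univ : Finset (Equiv.Perm (Fin n))).filter (fun τ =>
    ∀ i ∈ Finset.range (n - 1),
      (Even i ∧ ent τ i < ent τ (i + 1)) ∨ (¬ Even i ∧ ent τ (i + 1) < ent τ i))).card

/-- `c³ᵢ(σ)`, 0-indexed: number of `j > i+1` with `σᵢ σᵢ₊₁ σⱼ` odd. -/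
def c3 {n : ℕ} (σ : Equiv.Perm (Fin n)) (i : ℕ) : ℕ :=
  ((Finset.range n).filter (fun j => i + 1 < j ∧ odd3 (ent σ i) (ent σ (i + 1)) (ent σ j))).card

/-- `ĉᵢ(σ)`, 0-indexed. -/
def chat {n : ℕ} (σ : Equiv.Perm (Fin n)) (i : ℕ) : ℕ :=
  ((Finset.range n).filter (fun j => i < j ∧
    ((Even i ∧ ent σ j < ent σ i) ∨ (¬ Even i ∧ ent σ i < ent σ j)))).card

/-- `i₃` of an arbitrary word `f 0, f 1, ..., f (m-1)`. -/
def i3f (m : ℕ) (f : ℕ → ℕ) : ℕ :=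
  ((Finset.range m ×ˢ Finset.range m).filter (fun p =>
    p.1 + 1 < p.2 ∧ odd3 (f p.1) (f (p.1 + 1)) (f p.2))).card

/-- the 3-inversion statistic `i₃`. -/
def i3 {n : ℕ} (σ : Equiv.Perm (Fin n)) : ℕ := i3f n (ent σ)

/-- the word `1*σ` (0-based values): `0, σ₀+1, σ₁+1, ...`. -/
def oneStar {n : ℕ} (σ : Equiv.Perm (Fin n)) : ℕ → ℕ :=
  fun i => if i = 0 then 0 else ent σ (i - 1) + 1

/-- number of alternating inversions `î(σ)`. -/
def altInv {n : ℕ} (σ : Equiv.Perm (Fin n)) : ℕ :=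
  ((Finset.range n ×ˢ Finset.range n).filter (fun p => p.1 < p.2 ∧
    ((Even p.1 ∧ ent σ p.2 < ent σ p.1) ∨ (¬ Even p.1 ∧ ent σ p.1 < ent σ p.2)))).card

/-- number of inversions of the word `f 0, ..., f (m-1)`. -/
def invf (m : ℕ) (f : ℕ → ℕ) : ℕ :=
  ((Finset.range m ×ˢ Finset.range m).filter (fun p => p.1 < p.2 ∧ f p.2 < f p.1)).card

/-- major index of the word `f 0, ..., f (m-1)` (descent at 0-indexed `i` contributes `i+1`). -/
def majf (m : ℕ) (f : ℕ → ℕ) : ℕ :=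
  ∑ i ∈ (Finset.range (m - 1)).filter (fun i => f (i + 1) < f i), (i + 1)

/-- `Â(m, r)`: number of permutations of `[m]` with `r - 1` alternating descents. -/
def Ahat (m r : ℕ) : ℕ :=
  ((Finset.univ : Finset (Equiv.Perm (Fin m))).filter (fun σ => (altD σ).card + 1 = r)).card

/-- down-up alternating: `σ₁ > σ₂ < σ₃ > ⋯`. -/
def DownUp {n : ℕ} (σ : Equiv.Perm (Fin n)) : Prop :=
  ∀ i ∈ Finset.range (n - 1),
    (Even i ∧ ent σ (i + 1) < ent σ i) ∨ (¬ Even i ∧ ent σ i < ent σ (i + 1))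

instance {n : ℕ} (σ : Equiv.Perm (Fin n)) : Decidable (DownUp σ) := by
  unfold DownUp; infer_instance

/-- up-down alternating: `σ₁ < σ₂ > σ₃ < ⋯`. -/
def UpDown {n : ℕ} (σ : Equiv.Perm (Fin n)) : Prop :=
  ∀ i ∈ Finset.range (n - 1),
    (Even i ∧ ent σ i < ent σ (i + 1)) ∨ (¬ Even i ∧ ent σ (i + 1) < ent σ i)

lemma ent_lt {n : ℕ} (σ : Equiv.Perm (Fin n)) {m : ℕ} (h : m < n) : ent σ m < n := by
  unfold ent; rw [dif_pos h]; exact (σ _).isLt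

lemma ent_ne {n : ℕ} (σ : Equiv.Perm (Fin n)) {m m' : ℕ} (hm : m < n) (hm' : m' < n)
    (h : m ≠ m') : ent σ m ≠ ent σ m' := by
  unfold ent; rw [dif_pos hm, dif_pos hm']
  intro he
  exact h (Fin.mk.injEq m hm m' hm' ▸ congrArg Fin.val (σ.injective (Fin.val_injective he)))

/-- Key: adding 1 mod n to three distinct values preserves the parity of the triple. -/
lemma odd3_succ_mod {n a b c : ℕ} (ha : a < n) (hb : b < n) (hc : c < n)
    (hab : a ≠ b) (hac : a ≠ c) (hbc : b ≠ c) :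
    odd3 ((a + 1) % n) ((b + 1) % n) ((c + 1) % n) ↔ odd3 a b c := by
  have hg : ∀ x, x < n → (x + 1) % n = if x = n - 1 then 0 else x + 1 := by
    intro x hx
    split_ifs with h
    · have : x + 1 = n := by omega
      rw [this, Nat.mod_self]
    · exact Nat.mod_eq_of_lt (by omega)
  rw [hg a ha, hg b hb, hg c hc]
  unfold odd3
  by_cases h1 : a = n - 1 <;> by_cases h2 : b = n - 1 <;> by_cases h3 : c = n - 1 <;>
    simp only [h1, h2, h3, if_pos, if_neg, ite_true, ite_false, if_true, if_false] <;>
    split_ifs <;> first | rfl | omega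

lemma ent_mul_shift {m : ℕ} (σ : Equiv.Perm (Fin (m + 1))) {p : ℕ} (hp : p < m + 1) :
    ent ((Equiv.addRight (1 : Fin (m + 1)) : Equiv.Perm (Fin (m + 1))) * σ) p
      = (ent σ p + 1) % (m + 1) := by
  unfold ent
  rw [dif_pos hp, dif_pos hp]
  show ((σ ⟨p, hp⟩ + 1 : Fin (m + 1)) : ℕ) = _
  rw [Fin.val_add, Fin.val_one']
  conv_rhs => rw [Nat.add_mod]
  rw [Nat.mod_eq_of_lt (σ ⟨p, hp⟩).isLt]

lemma D3_mul_shift {m : ℕ} (σ : Equiv.Perm (Fin (m + 1))) :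
    D3 ((Equiv.addRight (1 : Fin (m + 1)) : Equiv.Perm (Fin (m + 1))) * σ) = D3 σ := by
  unfold D3
  apply Finset.filter_congr
  intro p hp
  rw [Finset.mem_range] at hp
  have h0 : p < m + 1 := by omega
  have h1 : p + 1 < m + 1 := by omega
  have h2 : p + 2 < m + 1 := by omega
  rw [ent_mul_shift σ h0, ent_mul_shift σ h1, ent_mul_shift σ h2]
  exact odd3_succ_mod (ent_lt σ h0) (ent_lt σ h1) (ent_lt σ h2)
    (ent_ne σ h0 h1 (by omega)) (ent_ne σ h0 h2 (by omega)) (ent_ne σ h1 h2 (by omega))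

open Fin.NatCast
open Fin.CommRing

theorem stmt1 (n : ℕ) (B : Finset ℕ) (hB : B ⊆ Finset.range (n - 2))
    (i j k l : Fin n) :
    ((Finset.univ : Finset (Equiv.Perm (Fin n))).filter
      (fun σ => D3 σ = B ∧ σ i = j)).card =
    ((Finset.univ : Finset (Equiv.Perm (Fin n))).filter
      (fun σ => D3 σ = B ∧ σ k = l)).card := by
  obtain ⟨m, rfl⟩ : ∃ m, n = m + 1 := ⟨n - 1, by have := i.isLt; omega⟩
  set T : Equiv.Perm (Fin (m + 1)) := (Equiv.addRight (1 : Fin (m + 1))) with hT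
  set N : Fin (m + 1) → Fin (m + 1) → ℕ := fun i j =>
    ((Finset.univ : Finset (Equiv.Perm (Fin (m + 1)))).filter
      (fun σ => D3 σ = B ∧ σ i = j)).card with hN
  have hstep : ∀ (i j : Fin (m + 1)), N i j = N i (j + 1) := by
    intro i j
    apply Finset.card_equiv (Equiv.mulLeft T)
    intro σ
    simp only [Finset.mem_filter, Finset.mem_univ, true_and, Equiv.coe_mulLeft]
    rw [D3_mul_shift σ]
    constructor
    · rintro ⟨h1, h2⟩
      refine ⟨h1, ?_⟩
      show σ i + 1 = j + 1
      rw [h2]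
    · rintro ⟨h1, h2⟩
      refine ⟨h1, ?_⟩
      have : σ i + 1 = j + 1 := h2
      exact add_right_cancel this
  have hiter : ∀ (i j : Fin (m + 1)) (d : ℕ), N i j = N i (j + (d : Fin (m + 1))) := by
    intro i j d
    induction d with
    | zero => simp
    | succ d ih =>
      rw [ih, hstep i (j + (d : Fin (m + 1)))]
      congr 1
      push_cast
      ring
  have hall : ∀ (i j j' : Fin (m + 1)), N i j = N i j' := by
    intro i j j'
    have := hiter i j ((j' - j : Fin (m + 1)) : ℕ)
    rwa [Fin.cast_val_eq_self, add_sub_cancel] at this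
  have hsum : ∀ (i : Fin (m + 1)),
      ((Finset.univ : Finset (Equiv.Perm (Fin (m + 1)))).filter
        (fun σ => D3 σ = B)).card = (m + 1) * N i 0 := by
    intro i
    rw [Finset.card_eq_sum_card_fiberwise
      (f := fun σ : Equiv.Perm (Fin (m + 1)) => σ i) (t := Finset.univ)
      (fun x _ => Finset.mem_univ _)]
    have : ∀ j : Fin (m + 1),
        ((Finset.univ.filter (fun σ : Equiv.Perm (Fin (m + 1)) => D3 σ = B)).filter
          (fun σ => σ i = j)).card = N i 0 := by
      intro j
      rw [Finset.filter_filter]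
      exact (hall i j 0) ▸ rfl
    rw [Finset.sum_congr rfl (fun j _ => this j), Finset.sum_const, Finset.card_univ,
      Fintype.card_fin, smul_eq_mul]
  have key : (m + 1) * N i j = (m + 1) * N k l := by
    rw [hall i j 0, hall k l 0, ← hsum i, ← hsum k]
  exact Nat.eq_of_mul_eq_mul_left (by omega) key
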